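/- Equality case of the Gibbs variational principle: for a probability vector p' on S, Ω[p'] = -β⁻¹ log Ξ holds if and only if p' equals the Boltzmann distribution p; equivalently, Ω[p'] > Ω[p] whenever p' ≠ p. -/
import Mathlib

/-- Pointwise Gibbs inequality: for `0 ≤ a` and `0 < b`,
`a - b ≤ a * (log a - log b)`, with strict inequality when `a ≠ b`. -/
lemma gibbs_pointwise {a b : ℝ} (ha : 0 ≤ a) (hb : 0 < b) :
    a - b ≤ a * (Real.log a - Real.log b) ∧
      (a ≠ b → a - b < a * (Real.log a - Real.log b)) := by
  rcases eq_or_lt_of_le ha with h0 | hpos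
  · constructor
    · simp [← h0]; linarith
    · intro _; simp [← h0]; linarith
  · have key : ∀ (h : a ≠ b), a - b < a * (Real.log a - Real.log b) := by
      intro hne
      have h1 : b / a ≠ 1 := by
        intro h; apply hne; field_simp at h; linarith
      have h2 : Real.log (b / a) < b / a - 1 :=
        Real.log_lt_sub_one_of_pos (div_pos hb hpos) h1
      have h3 : Real.log (b / a) = Real.log b - Real.log a :=
        Real.log_div hb.ne' hpos.ne'
      have h4 : a * Real.log (b / a) < a * (b / a - 1) :=
        (mul_lt_mul_iff_right₀ hpos).mpr h2
      have h5 : a * (b / a - 1) = b - a := by field_simp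
      nlinarith [h4]
    constructor
    · rcases eq_or_ne a b with rfl | hne
      · simp
      · exact (key hne).le
    · exact key

theorem gibbs_variational_equality
    {S : Type*} [Fintype S] [Nonempty S]
    (β : ℝ) (hβ : 0 < β) (E : S → ℝ)
    (Ξ : ℝ) (hΞ : Ξ = ∑ ν, Real.exp (-β * E ν))
    (p : S → ℝ) (hp : ∀ ν, p ν = Real.exp (-β * E ν) / Ξ)
    (Ω : (S → ℝ) → ℝ)
    (hΩ : ∀ q : S → ℝ, Ω q = ∑ ν, q ν * (β⁻¹ * Real.log (q ν) + E ν))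
    (p' : S → ℝ) (hp'nonneg : ∀ ν, 0 ≤ p' ν) (hp'sum : ∑ ν, p' ν = 1) :
    (Ω p' = -β⁻¹ * Real.log Ξ ↔ p' = p) ∧ (p' ≠ p → Ω p < Ω p') := by
  have hΞpos : 0 < Ξ := by
    rw [hΞ]; exact Finset.sum_pos (fun ν _ => Real.exp_pos _) Finset.univ_nonempty
  have hppos : ∀ ν, 0 < p ν := fun ν => by
    rw [hp]; exact div_pos (Real.exp_pos _) hΞpos
  have hpsum : ∑ ν, p ν = 1 := by
    simp only [hp, ← Finset.sum_div, ← hΞ]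
    exact div_self hΞpos.ne'
  have hlogp : ∀ ν, Real.log (p ν) = -β * E ν - Real.log Ξ := fun ν => by
    rw [hp, Real.log_div (Real.exp_pos _).ne' hΞpos.ne', Real.log_exp]
  -- Ω p = -β⁻¹ log Ξ
  have hΩp : Ω p = -β⁻¹ * Real.log Ξ := by
    rw [hΩ]
    have : ∀ ν, p ν * (β⁻¹ * Real.log (p ν) + E ν) = p ν * (-β⁻¹ * Real.log Ξ) := by
      intro ν
      rw [hlogp ν]
      have : β⁻¹ * (-β * E ν - Real.log Ξ) + E ν = -β⁻¹ * Real.log Ξ := by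
        field_simp; ring
      rw [this]
    rw [Finset.sum_congr rfl fun ν _ => this ν, ← Finset.sum_mul, hpsum, one_mul]
  -- key difference identity
  have hdiff : Ω p' - Ω p =
      β⁻¹ * ∑ ν, p' ν * (Real.log (p' ν) - Real.log (p ν)) := by
    rw [hΩp, hΩ, Finset.mul_sum]
    have : ∀ ν, p' ν * (β⁻¹ * Real.log (p' ν) + E ν) =
        β⁻¹ * (p' ν * (Real.log (p' ν) - Real.log (p ν))) + p' ν * (-β⁻¹ * Real.log Ξ) := by
      intro ν
      rw [hlogp ν]
      field_simp; ring
    rw [Finset.sum_congr rfl fun ν _ => this ν, Finset.sum_add_distrib,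
      ← Finset.sum_mul, hp'sum]
    ring
  -- nonnegativity of each term shifted
  have hterm : ∀ ν, p' ν - p ν ≤ p' ν * (Real.log (p' ν) - Real.log (p ν)) :=
    fun ν => (gibbs_pointwise (hp'nonneg ν) (hppos ν)).1
  have hsum_ge : (0:ℝ) ≤ ∑ ν, p' ν * (Real.log (p' ν) - Real.log (p ν)) := by
    have h := Finset.sum_le_sum (s := Finset.univ)
      (f := fun ν => p' ν - p ν)
      (g := fun ν => p' ν * (Real.log (p' ν) - Real.log (p ν))) (fun ν _ => hterm ν)
    simpa [Finset.sum_sub_distrib, hp'sum, hpsum] using h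
  have hstrict : p' ≠ p → 0 < ∑ ν, p' ν * (Real.log (p' ν) - Real.log (p ν)) := by
    intro hne
    obtain ⟨ν₀, hν₀⟩ : ∃ ν, p' ν ≠ p ν := by
      by_contra h; push_neg at h; exact hne (funext h)
    have hs : ∑ ν, (p' ν - p ν) < ∑ ν, p' ν * (Real.log (p' ν) - Real.log (p ν)) := by
      apply Finset.sum_lt_sum (fun ν _ => hterm ν)
      exact ⟨ν₀, Finset.mem_univ _, (gibbs_pointwise (hp'nonneg ν₀) (hppos ν₀)).2 hν₀⟩
    simpa [Finset.sum_sub_distrib, hp'sum, hpsum] using hs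
  have hβinv : 0 < β⁻¹ := inv_pos.mpr hβ
  have hlt : p' ≠ p → Ω p < Ω p' := by
    intro hne
    have := mul_pos hβinv (hstrict hne)
    linarith [hdiff]
  refine ⟨⟨fun h => ?_, fun h => by rw [h, hΩp]⟩, hlt⟩
  by_contra hne
  have := hlt hne
  rw [hΩp] at this
  linarith
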